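/- Let f(E,n) = −E + 2(3/2 − n^M)(E² − E³/4) with M ≥ 1 a fixed integer. If 0 < E < 4, n ≥ 0 and f(E,n) = 0, then ∂f/∂E(E,n) = (1 − E/2)/(1 − E/4). In particular, on the nontrivial branch of the critical manifold, ∂f/∂E is positive for 0 < E < 2 (repelling middle branch), negative for 2 < E < 4 (attracting right branch), and vanishes exactly at E = 2, in which case n^M = 1; so for n ≥ 0 the unique point of this branch where normal hyperbolicity fails is p_F = (2, 1). -/
import Mathlib


/-- On the nontrivial branch of the Karma critical manifold (`f(E,n) = 0`,
`0 < E < 4`, `n ≥ 0`), one has `∂f/∂E = (1 - E/2)/(1 - E/4)`: positive for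
`0 < E < 2` (repelling), negative for `2 < E < 4` (attracting), vanishing
exactly at `E = 2`, where moreover `n^M = 1` and hence `n = 1`; so the unique
non-normally-hyperbolic point of this branch is `p_F = (2,1)`. -/
theorem karma_branch_hyperbolicity (M : ℕ) (hM : 1 ≤ M) (f : ℝ → ℝ → ℝ)
    (hf : ∀ E n, f E n = -E + 2 * (3 / 2 - n ^ M) * (E ^ 2 - E ^ 3 / 4)) :
    ∀ E n : ℝ, 0 < E → E < 4 → 0 ≤ n → f E n = 0 →
      HasDerivAt (fun E' => f E' n) ((1 - E / 2) / (1 - E / 4)) E ∧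
      (E < 2 → 0 < (1 - E / 2) / (1 - E / 4)) ∧
      (2 < E → (1 - E / 2) / (1 - E / 4) < 0) ∧
      ((1 - E / 2) / (1 - E / 4) = 0 ↔ E = 2) ∧
      (E = 2 → n ^ M = 1 ∧ n = 1) := by
  intro E n hE0 hE4 hn hfz
  have h4 : (1 : ℝ) - E / 4 > 0 := by linarith
  have h4' : (1 : ℝ) - E / 4 ≠ 0 := ne_of_gt h4
  set c : ℝ := 2 * (3 / 2 - n ^ M) with hc
  have hz : -E + c * (E ^ 2 - E ^ 3 / 4) = 0 := by rw [← hf]; exact hfz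
  -- from f = 0 and E ≠ 0: c * E * (1 - E/4) = 1
  have key : c * E * (1 - E / 4) = 1 := by
    have h : E * (c * E * (1 - E / 4) - 1) = 0 := by linear_combination hz
    rcases mul_eq_zero.mp h with h | h
    · exact absurd h (ne_of_gt hE0)
    · linarith
  refine ⟨?_, ?_, ?_, ?_, ?_⟩
  · have hd : HasDerivAt (fun E' : ℝ => -E' + c * (E' ^ 2 - E' ^ 3 / 4))
        (-1 + c * (2 * E - 3 * E ^ 2 / 4)) E := by
      have h1 : HasDerivAt (fun E' : ℝ => E') 1 E := hasDerivAt_id E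
      have h2 : HasDerivAt (fun E' : ℝ => E' ^ 2) (2 * E) E := by
        simpa using (hasDerivAt_pow 2 E)
      have h3 : HasDerivAt (fun E' : ℝ => E' ^ 3) (3 * E ^ 2) E := by
        simpa using (hasDerivAt_pow 3 E)
      have := (h1.neg).add (((h2.sub (h3.div_const 4)).const_mul c))
      exact this
    have heq : -1 + c * (2 * E - 3 * E ^ 2 / 4) = (1 - E / 2) / (1 - E / 4) := by
      rw [eq_div_iff h4']
      linear_combination (2 - 3 * E / 4) * key
    have : (fun E' : ℝ => f E' n) = fun E' : ℝ => -E' + c * (E' ^ 2 - E' ^ 3 / 4) := by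
      funext E'; rw [hf]
    rw [this, ← heq]
    exact hd
  · intro h2; apply div_pos <;> linarith
  · intro h2
    apply div_neg_of_neg_of_pos <;> linarith
  · constructor
    · intro h
      have := (div_eq_zero_iff.mp h)
      rcases this with h | h
      · linarith
      · exact absurd h h4'
    · intro h; rw [h]; norm_num
  · intro hE2
    have hnM : n ^ M = 1 := by
      rw [hE2] at key
      have : c = 1 := by linarith
      rw [hc] at this; linarith
    refine ⟨hnM, ?_⟩
    rcases lt_trichotomy n 1 with h | h | h
    · exfalso
      have := pow_lt_one₀ hn h (Nat.one_le_iff_ne_zero.mp hM)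
      linarith
    · exact h
    · exfalso
      have := one_lt_pow₀ h (Nat.one_le_iff_ne_zero.mp hM)
      linarith
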